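/- arXiv:cs/0606087 — 14 statements merged into one kernel-verified Lean document; each statement's English description precedes it below -/
import Mathlib

section
/- In an abstract LP-type problem with violator mapping V, for any A, B ⊆ H, V(A) = V(B) implies w(A) = w(B). -/
/-- The violator mapping of an abstract LP-type problem `(H, w)`:
`V G = {h ∈ H : w (G ∪ {h}) > w G}`. -/
def violatorsLP {α W : Type*} [DecidableEq α] [LT W]
    (H : Finset α) (w : Finset α → W) (G : Finset α) : Set α :=
  {h | h ∈ H ∧ w G < w (insert h G)}

/-- Key lemma: if no element of `B` violates `A`, then `w (A ∪ B) = w A`. -/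
lemma aux_union {α W : Type*} [DecidableEq α] [LinearOrder W]
    (H : Finset α) (w : Finset α → W)
    (mono : ∀ F G : Finset α, F ⊆ G → G ⊆ H → w F ≤ w G)
    (loc : ∀ F G : Finset α, ∀ h ∈ H, F ⊆ G → G ⊆ H →
      w F = w G → w G < w (insert h G) → w F < w (insert h F))
    (A B : Finset α) (hA : A ⊆ H) (hB : B ⊆ H)
    (hnv : ∀ b ∈ B, ¬ (w A < w (insert b A))) :
    w (A ∪ B) = w A := by
  induction B using Finset.induction_on with
  | empty => simp
  | @insert b s hb ih =>
    have hsH : s ⊆ H := fun x hx => hB (Finset.mem_insert_of_mem hx)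
    have hbH : b ∈ H := hB (Finset.mem_insert_self b s)
    have hs : w (A ∪ s) = w A :=
      ih hsH (fun x hx => hnv x (Finset.mem_insert_of_mem hx))
    have hsub : A ∪ s ⊆ H := Finset.union_subset hA hsH
    have heq : A ∪ insert b s = insert b (A ∪ s) := Finset.union_insert b A s
    rw [heq]
    rcases lt_or_ge (w (A ∪ s)) (w (insert b (A ∪ s))) with h | h
    · exact absurd (loc A (A ∪ s) b hbH Finset.subset_union_left hsub hs.symm h)
        (hnv b (Finset.mem_insert_self b s))
    · exact le_antisymm (hs ▸ h)
        (hs ▸ mono (A ∪ s) (insert b (A ∪ s)) (Finset.subset_insert _ _)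
          (Finset.insert_subset hbH hsub))

/-- `V A = V B` implies `w A = w B`. -/
theorem stmt_2 {α W : Type*} [DecidableEq α] [LinearOrder W]
    (H : Finset α) (w : Finset α → W)
    (mono : ∀ F G : Finset α, F ⊆ G → G ⊆ H → w F ≤ w G)
    (loc : ∀ F G : Finset α, ∀ h ∈ H, F ⊆ G → G ⊆ H →
      w F = w G → w G < w (insert h G) → w F < w (insert h F))
    (A B : Finset α) (hA : A ⊆ H) (hB : B ⊆ H)
    (hV : violatorsLP H w A = violatorsLP H w B) :
    w A = w B := by
  have key : ∀ (X Y : Finset α), X ⊆ H → Y ⊆ H →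
      violatorsLP H w X = violatorsLP H w Y → w (X ∪ Y) = w X := by
    intro X Y hX hY h
    refine aux_union H w mono loc X Y hX hY ?_
    intro b hb hlt
    have hbV : b ∈ violatorsLP H w X := ⟨hY hb, hlt⟩
    rw [h] at hbV
    have := hbV.2
    rw [Finset.insert_eq_self.2 hb] at this
    exact lt_irrefl _ this
  have h1 := key A B hA hB hV
  have h2 := key B A hB hA hV.symm
  rw [Finset.union_comm] at h2
  rw [← h1, ← h2]
end

section
/- The violator mapping of an abstract LP-type problem satisfies the violator space axioms: Consistency (G ∩ V(G) = ∅ for all G ⊆ H) and Locality (for all F ⊆ G ⊆ H with G ∩ V(F) = ∅, V(G) = V(F)). -/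
/-- the violator mapping of an abstract LP-type problem satisfies
Consistency (`G ∩ V G = ∅`) and violator-space Locality
(`F ⊆ G ⊆ H` and `G ∩ V F = ∅` imply `V G = V F`). -/
theorem stmt_5 {α W : Type*} [DecidableEq α] [LinearOrder W]
    (H : Finset α) (w : Finset α → W)
    (mono : ∀ F G : Finset α, F ⊆ G → G ⊆ H → w F ≤ w G)
    (loc : ∀ F G : Finset α, ∀ h ∈ H, F ⊆ G → G ⊆ H →
      w F = w G → w G < w (insert h G) → w F < w (insert h F)) :
    (∀ G : Finset α, G ⊆ H → (↑G : Set α) ∩ violatorsLP H w G = ∅) ∧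
    (∀ F G : Finset α, F ⊆ G → G ⊆ H → (↑G : Set α) ∩ violatorsLP H w F = ∅ →
      violatorsLP H w G = violatorsLP H w F) := by
  constructor
  · intro G hG
    ext x
    simp only [Set.mem_inter_iff, violatorsLP, Set.mem_setOf_eq, Finset.coe_mem,
      Set.mem_empty_iff_false, iff_false, Finset.mem_coe]
    rintro ⟨hxG, _, hlt⟩
    rw [Finset.insert_eq_self.mpr hxG] at hlt
    exact lt_irrefl _ hlt
  · intro F G hFG hGH hdisj
    -- no element of G violates F
    have hnov : ∀ g ∈ G, ¬ w F < w (insert g F) := by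
      intro g hg hlt
      have : g ∈ (↑G : Set α) ∩ violatorsLP H w F :=
        ⟨hg, hGH hg, hlt⟩
      rw [hdisj] at this
      exact this
    -- w (F ∪ G') = w F for all G' ⊆ G
    have key : ∀ G' : Finset α, G' ⊆ G → w (F ∪ G') = w F := by
      intro G'
      induction G' using Finset.induction_on with
      | empty => intro _; rw [Finset.union_empty]
      | @insert a s ha ih =>
        intro hsub
        have hs : s ⊆ G := fun x hx => hsub (Finset.mem_insert_of_mem hx)
        have haG : a ∈ G := hsub (Finset.mem_insert_self a s)
        have ihs := ih hs
        have hFs : F ∪ s ⊆ H := Finset.union_subset (hFG.trans hGH) (hs.trans hGH)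
        have h1 : w (F ∪ insert a s) ≤ w (F ∪ s) := by
          by_contra hc
          push_neg at hc
          rw [Finset.union_insert] at hc
          exact hnov a haG (loc F (F ∪ s) a (hGH haG) Finset.subset_union_left hFs
            ihs.symm hc)
        have h2 : w (F ∪ s) ≤ w (F ∪ insert a s) := by
          apply mono
          · exact Finset.union_subset_union_right (Finset.subset_insert a s)
          · exact Finset.union_subset (hFG.trans hGH)
              (hsub.trans hGH)
        rw [le_antisymm h1 h2, ihs]
    have hFG' : w F = w G := by
      have := key G (le_refl G).subset
      rw [Finset.union_eq_right.mpr hFG] at this; exact this.symm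
    ext h
    simp only [violatorsLP, Set.mem_setOf_eq]
    constructor
    · rintro ⟨hH, hlt⟩
      exact ⟨hH, loc F G h hH hFG hGH hFG' hlt⟩
    · rintro ⟨hH, hlt⟩
      refine ⟨hH, ?_⟩
      have h3 : w (insert h F) ≤ w (insert h G) := by
        apply mono
        · exact Finset.insert_subset_insert h hFG
        · exact Finset.insert_subset hH hGH
      calc w G = w F := hFG'.symm
        _ < w (insert h F) := hlt
        _ ≤ w (insert h G) := h3
end

section
/- Every violator space (H, V) satisfies the following monotonicity property: for all F ⊆ E ⊆ G ⊆ H, if V(F) = V(G) then V(E) = V(F). -/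
/-- monotonicity of violator spaces: for `F ⊆ E ⊆ G ⊆ H`,
`V F = V G` implies `V E = V F`. -/
theorem stmt_7 {α : Type*} [DecidableEq α]
    (H : Finset α) (V : Finset α → Finset α)
    (cons : ∀ G : Finset α, G ⊆ H → G ∩ V G = ∅)
    (loc : ∀ F G : Finset α, F ⊆ G → G ⊆ H → G ∩ V F = ∅ → V G = V F)
    (F E G : Finset α) (hFE : F ⊆ E) (hEG : E ⊆ G) (hG : G ⊆ H)
    (h : V F = V G) :
    V E = V F := by
  apply loc F E hFE (hEG.trans hG)
  have hGV : G ∩ V F = ∅ := by rw [h]; exact cons G hG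
  have := Finset.inter_subset_inter hEG (Finset.Subset.refl (V F))
  rw [hGV] at this
  exact Finset.subset_empty.mp this
end

section
/- In a violator space (H, V), for every R ⊆ H and h ∈ H: V(R) ≠ V(R ∪ {h}) if and only if h ∈ V(R). -/
/-- in a violator space `(H, V)`, for `R ⊆ H` and `h ∈ H`:
`V R ≠ V (R ∪ {h})` if and only if `h ∈ V R`. -/
theorem stmt_8 {α : Type*} [DecidableEq α]
    (H : Finset α) (V : Finset α → Finset α)
    (cons : ∀ G : Finset α, G ⊆ H → G ∩ V G = ∅)
    (loc : ∀ F G : Finset α, F ⊆ G → G ⊆ H → G ∩ V F = ∅ → V G = V F)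
    (R : Finset α) (hR : R ⊆ H) (h : α) (hh : h ∈ H) :
    V R ≠ V (insert h R) ↔ h ∈ V R := by
  have hsub : insert h R ⊆ H := Finset.insert_subset hh hR
  constructor
  · intro hne
    by_contra hnot
    apply hne
    have hdisj : insert h R ∩ V R = ∅ := by
      have hRc := cons R hR
      ext x
      simp only [Finset.mem_inter, Finset.mem_insert, Finset.notMem_empty, iff_false]
      rintro ⟨hx | hx, hxv⟩
      · exact hnot (hx ▸ hxv)
      · exact absurd (Finset.mem_inter.mpr ⟨hx, hxv⟩) (by simp [hRc])
    exact (loc R (insert h R) (Finset.subset_insert _ _) hsub hdisj).symm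
  · intro hv heq
    have := cons (insert h R) hsub
    have : h ∈ insert h R ∩ V (insert h R) :=
      Finset.mem_inter.mpr ⟨Finset.mem_insert_self _ _, heq ▸ hv⟩
    simp_all
end

section
/- In a violator space (H, V), for every R ⊆ H and h ∈ H: V(R) ≠ V(R \ {h}) if and only if h is contained in every basis of R. -/
/-- in a violator space `(H, V)`, for `R ⊆ H` and `h ∈ H`:
`V R ≠ V (R \ {h})` if and only if `h` is contained in every basis of `R`
(a basis of `R` being an inclusion-minimal `B ⊆ R` with `V B = V R`). -/
theorem stmt_9 {α : Type*} [DecidableEq α]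
    (H : Finset α) (V : Finset α → Finset α)
    (cons : ∀ G : Finset α, G ⊆ H → G ∩ V G = ∅)
    (loc : ∀ F G : Finset α, F ⊆ G → G ⊆ H → G ∩ V F = ∅ → V G = V F)
    (R : Finset α) (hR : R ⊆ H) (h : α) (hh : h ∈ H) :
    V R ≠ V (R.erase h) ↔
      ∀ B : Finset α, B ⊆ R → V B = V R → (∀ B' : Finset α, B' ⊂ B → V B' ≠ V R) →
        h ∈ B := by
  have hsub : R.erase h ⊆ R := Finset.erase_subset h R
  constructor
  · intro hne B hBR hVB _
    by_contra hB
    have hBsub : B ⊆ R.erase h := fun x hx =>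
      Finset.mem_erase.2 ⟨fun e => hB (e ▸ hx), hBR hx⟩
    have hdisj : (R.erase h) ∩ V B = ∅ := by
      rw [hVB]
      apply Finset.eq_empty_of_forall_notMem
      intro x hx
      rw [Finset.mem_inter] at hx
      have hmem : x ∈ R ∩ V R := Finset.mem_inter.2 ⟨hsub hx.1, hx.2⟩
      rw [cons R hR] at hmem
      exact absurd hmem (Finset.notMem_empty x)
    have hVe := loc B (R.erase h) hBsub (hsub.trans hR) hdisj
    exact hne (by rw [hVe, hVB])
  · intro hall heq
    obtain ⟨B, hBmem, hBmin⟩ := Finset.exists_min_image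
      ((R.erase h).powerset.filter (fun B => V B = V R)) Finset.card
      ⟨R.erase h, by
        simp only [Finset.mem_filter, Finset.mem_powerset]
        exact ⟨Finset.Subset.refl _, heq.symm⟩⟩
    simp only [Finset.mem_filter, Finset.mem_powerset] at hBmem
    have hB := hall B (hBmem.1.trans hsub) hBmem.2
      (fun B' hB' hVB' => by
        have hmem : B' ∈ (R.erase h).powerset.filter (fun B => V B = V R) := by
          simp only [Finset.mem_filter, Finset.mem_powerset]
          exact ⟨hB'.subset.trans hBmem.1, hVB'⟩
        exact absurd (hBmin B' hmem) (not_le.2 (Finset.card_lt_card hB')))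
    exact (Finset.notMem_erase h R) (hBmem.1 hB)
end

section
/- In a violator space (H, V), if C ⊆ G and G ∩ V(C) ≠ ∅, then G ∩ V(C) contains at least one element from every basis of G. -/
/-- in a violator space `(H, V)`, if `C ⊆ G` and `G ∩ V C ≠ ∅`, then
`G ∩ V C` contains an element of every basis of `G`. -/
theorem stmt_10 {α : Type*} [DecidableEq α]
    (H : Finset α) (V : Finset α → Finset α)
    (cons : ∀ G : Finset α, G ⊆ H → G ∩ V G = ∅)
    (loc : ∀ F G : Finset α, F ⊆ G → G ⊆ H → G ∩ V F = ∅ → V G = V F)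
    (G C : Finset α) (hG : G ⊆ H) (hCG : C ⊆ G)
    (hne : (G ∩ V C).Nonempty) :
    ∀ B : Finset α, B ⊆ G → V B = V G → (∀ B' : Finset α, B' ⊂ B → V B' ≠ V G) →
      (B ∩ (G ∩ V C)).Nonempty := by
  intro B hBG hVB _
  by_contra hcon
  rw [Finset.not_nonempty_iff_eq_empty] at hcon
  -- every element of B avoids V C
  have hBVC : ∀ x ∈ B, x ∉ V C := by
    intro x hx hxV
    have : x ∈ B ∩ (G ∩ V C) := by
      simp [Finset.mem_inter, hx, hBG hx, hxV]
    simp [hcon] at this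
  have hDG : B ∪ C ⊆ G := Finset.union_subset hBG hCG
  have hDH : B ∪ C ⊆ H := hDG.trans hG
  have hDC : (B ∪ C) ∩ V C = ∅ := by
    ext x
    simp only [Finset.mem_inter, Finset.mem_union, Finset.notMem_empty, iff_false, not_and]
    rintro (hx | hx) hxV
    · exact hBVC x hx hxV
    · have := cons C (hCG.trans hG)
      have : x ∈ C ∩ V C := Finset.mem_inter.2 ⟨hx, hxV⟩
      simp [cons C (hCG.trans hG)] at this
  have h1 : V (B ∪ C) = V C := loc C (B ∪ C) Finset.subset_union_right hDH hDC
  have hDB : (B ∪ C) ∩ V B = ∅ := by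
    ext x
    simp only [Finset.mem_inter, Finset.notMem_empty, iff_false, not_and]
    intro hx hxV
    rw [hVB] at hxV
    have : x ∈ G ∩ V G := Finset.mem_inter.2 ⟨hDG hx, hxV⟩
    simp [cons G hG] at this
  have h2 : V (B ∪ C) = V B := loc B (B ∪ C) Finset.subset_union_left hDH hDB
  have : V C = V G := by rw [← h1, h2, hVB]
  rw [this, cons G hG] at hne
  exact Finset.not_nonempty_empty hne
end

section
/- In a violator space (H, V), if B is a basis of W ∪ R with W ∪ R ⊆ G and B has no violators in G (i.e., G ∩ V(B) = ∅), then B is a basis of G. -/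
/-- in a violator space `(H, V)`, if `B` is a basis of `W ∪ R`,
`W ∪ R ⊆ G ⊆ H`, and `G ∩ V B = ∅`, then `B` is a basis of `G`. -/
theorem stmt_11 {α : Type*} [DecidableEq α]
    (H : Finset α) (V : Finset α → Finset α)
    (cons : ∀ G : Finset α, G ⊆ H → G ∩ V G = ∅)
    (loc : ∀ F G : Finset α, F ⊆ G → G ⊆ H → G ∩ V F = ∅ → V G = V F)
    (W R G B : Finset α) (hG : G ⊆ H) (hWRG : W ∪ R ⊆ G)
    (hB : B ⊆ W ∪ R) (hVB : V B = V (W ∪ R))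
    (hmin : ∀ B' : Finset α, B' ⊂ B → V B' ≠ V (W ∪ R))
    (hnoviol : G ∩ V B = ∅) :
    B ⊆ G ∧ V B = V G ∧ ∀ B' : Finset α, B' ⊂ B → V B' ≠ V G := by
  have hBG : B ⊆ G := hB.trans hWRG
  have hVG : V G = V B := loc B G hBG hG hnoviol
  exact ⟨hBG, hVG.symm, fun B' h hne => hmin B' h (hne.trans (hVG.trans hVB))⟩
end

section
/- Let (H, V) be the violator mapping of an abstract LP-type problem (H, w, W, ≤) and define bases B, C to be equivalent if V(B) = V(C), and define [B] ≤₀ [C] if there exist B' ∈ [B], C' ∈ [C] with B' ∩ V(C') = ∅. Then the transitive closure ≤₁ of ≤₀ on equivalence classes of bases is antisymmetric; i.e., the violator space arising from an LP-type problem is acyclic. -/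
/-- A basis of the LP-type problem: `B ⊆ H` with `w F ≠ w B` for all proper `F ⊂ B`. -/
def IsLPBasis {α W : Type*} (H : Finset α) (w : Finset α → W) (B : Finset α) : Prop :=
  B ⊆ H ∧ ∀ F : Finset α, F ⊂ B → w F ≠ w B

/-- The relation `≤₀` lifted to equivalence classes of bases (where `B ∼ C` iff
`V B = V C`): `[B] ≤₀ [C]` iff there are representatives `B' ∼ B`, `C' ∼ C`
(both bases) with `B' ∩ V C' = ∅`. -/
def leZero {α W : Type*} [DecidableEq α] [LT W]
    (H : Finset α) (w : Finset α → W) (B C : Finset α) : Prop :=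
  ∃ B' C' : Finset α, IsLPBasis H w B' ∧ IsLPBasis H w C' ∧
    violatorsLP H w B' = violatorsLP H w B ∧
    violatorsLP H w C' = violatorsLP H w C ∧
    (↑B' : Set α) ∩ violatorsLP H w C' = ∅

section Aux

variable {α W : Type*} [DecidableEq α] [LinearOrder W]
variable (H : Finset α) (w : Finset α → W)

lemma self_inter_violators (B : Finset α) :
    (↑B : Set α) ∩ violatorsLP H w B = ∅ := by
  ext h
  simp only [Set.mem_inter_iff, Set.mem_empty_iff_false, iff_false, violatorsLP,
    Set.mem_setOf_eq, Finset.mem_coe]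
  rintro ⟨hB, _, hlt⟩
  rw [Finset.insert_eq_self.mpr hB] at hlt
  exact lt_irrefl _ hlt

variable (mono : ∀ F G : Finset α, F ⊆ G → G ⊆ H → w F ≤ w G)
variable (loc : ∀ F G : Finset α, ∀ h ∈ H, F ⊆ G → G ⊆ H →
      w F = w G → w G < w (insert h G) → w F < w (insert h F))

include mono loc in
lemma union_w_eq (B C : Finset α) (hBH : B ⊆ H) (hCH : C ⊆ H)
    (hd : (↑B : Set α) ∩ violatorsLP H w C = ∅) : w (B ∪ C) = w C := by
  induction B using Finset.induction_on with
  | empty => simp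
  | @insert a S ha ih =>
    have haH : a ∈ H := hBH (Finset.mem_insert_self a S)
    have hSH : S ⊆ H := (Finset.subset_insert a S).trans hBH
    have hd' : (↑S : Set α) ∩ violatorsLP H w C = ∅ := by
      apply Set.eq_empty_of_subset_empty
      rw [← hd]
      exact Set.inter_subset_inter_left _ (by exact_mod_cast Finset.subset_insert a S)
    have ihw : w (S ∪ C) = w C := ih hSH hd'
    have hUH : S ∪ C ⊆ H := Finset.union_subset hSH hCH
    have hnlt : ¬ w (S ∪ C) < w (insert a (S ∪ C)) := by
      intro hlt
      have := loc C (S ∪ C) a haH Finset.subset_union_right hUH ihw.symm hlt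
      have hmem : a ∈ (↑(insert a S) : Set α) ∩ violatorsLP H w C :=
        ⟨by simp, haH, this⟩
      rw [hd] at hmem
      exact hmem
    have hle : w (S ∪ C) ≤ w (insert a (S ∪ C)) :=
      mono _ _ (Finset.subset_insert _ _) (Finset.insert_subset haH hUH)
    have : w (insert a (S ∪ C)) = w (S ∪ C) := le_antisymm (not_lt.mp hnlt) hle
    rw [Finset.insert_union, this, ihw]

include mono loc in
lemma viol_eq_of_w_eq (F G : Finset α) (hFG : F ⊆ G) (hGH : G ⊆ H)
    (hw : w F = w G) : violatorsLP H w F = violatorsLP H w G := by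
  ext h
  simp only [violatorsLP, Set.mem_setOf_eq]
  constructor
  · rintro ⟨hH, hlt⟩
    refine ⟨hH, hw ▸ (hlt.trans_le (mono _ _ (Finset.insert_subset_insert h hFG)
      (Finset.insert_subset hH hGH)))⟩
  · rintro ⟨hH, hlt⟩
    exact ⟨hH, loc F G h hH hFG hGH hw hlt⟩

include mono loc in
lemma w_eq_of_viol_eq (B C : Finset α) (hB : IsLPBasis H w B) (hC : IsLPBasis H w C)
    (h : violatorsLP H w B = violatorsLP H w C) : w B = w C := by
  have key : ∀ X Y : Finset α, X ⊆ H → Y ⊆ H →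
      (↑X : Set α) ∩ violatorsLP H w Y = ∅ → w X ≤ w Y := by
    intro X Y hXH hYH hd
    have hu := union_w_eq H w mono loc X Y hXH hYH hd
    exact (mono _ _ Finset.subset_union_left (Finset.union_subset hXH hYH)).trans hu.le
  have h1 : w B ≤ w C := key B C hB.1 hC.1 (h ▸ self_inter_violators H w B)
  have h2 : w C ≤ w B := key C B hC.1 hB.1 (h.symm ▸ self_inter_violators H w C)
  exact le_antisymm h1 h2

/-- Invariant carried along the transitive closure. -/
def chainP (X Y : Finset α) : Prop :=
  ∃ B' C' : Finset α, IsLPBasis H w B' ∧ IsLPBasis H w C' ∧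
    violatorsLP H w B' = violatorsLP H w X ∧
    violatorsLP H w C' = violatorsLP H w Y ∧
    w B' ≤ w C' ∧
    (w B' = w C' → violatorsLP H w X = violatorsLP H w Y)

include mono loc in
lemma leZero_chainP {X Y : Finset α} (h : leZero H w X Y) : chainP H w X Y := by
  obtain ⟨B', C', hB', hC', hVB, hVC, hd⟩ := h
  refine ⟨B', C', hB', hC', hVB, hVC, ?_, ?_⟩
  · have hu := union_w_eq H w mono loc B' C' hB'.1 hC'.1 hd
    exact (mono _ _ Finset.subset_union_left
      (Finset.union_subset hB'.1 hC'.1)).trans hu.le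
  · intro hw
    have hu := union_w_eq H w mono loc B' C' hB'.1 hC'.1 hd
    have hUH : B' ∪ C' ⊆ H := Finset.union_subset hB'.1 hC'.1
    have e1 : violatorsLP H w B' = violatorsLP H w (B' ∪ C') :=
      viol_eq_of_w_eq H w mono loc B' (B' ∪ C') Finset.subset_union_left hUH
        (by rw [hu, ← hw])
    have e2 : violatorsLP H w C' = violatorsLP H w (B' ∪ C') :=
      viol_eq_of_w_eq H w mono loc C' (B' ∪ C') Finset.subset_union_right hUH hu.symm
    rw [← hVB, ← hVC, e1, e2]

include mono loc in
lemma chainP_trans {X Y Z : Finset α} (h1 : chainP H w X Y) (h2 : chainP H w Y Z) :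
    chainP H w X Z := by
  obtain ⟨B1, C1, hB1, hC1, hVB1, hVC1, hle1, heq1⟩ := h1
  obtain ⟨B2, C2, hB2, hC2, hVB2, hVC2, hle2, heq2⟩ := h2
  have hmid : w C1 = w B2 :=
    w_eq_of_viol_eq H w mono loc C1 B2 hC1 hB2 (hVC1.trans hVB2.symm)
  refine ⟨B1, C2, hB1, hC2, hVB1, hVC2, ?_, ?_⟩
  · exact hle1.trans (hmid.le.trans hle2)
  · intro hw
    have e1 : w B1 = w C1 := le_antisymm hle1 (by rw [hmid]; exact hle2.trans hw.ge)
    have e2 : w B2 = w C2 := le_antisymm hle2 (by rw [← hmid, ← e1, hw])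
    exact (heq1 e1).trans (heq2 e2)

end Aux

/-- in the violator space arising from an abstract LP-type problem,
the transitive closure `≤₁` of `≤₀` on equivalence classes of bases is antisymmetric;
i.e., if `[B] ≤₁ [C]` and `[C] ≤₁ [B]` then `[B] = [C]` (that is, `V B = V C`). -/
theorem stmt_12 {α W : Type*} [DecidableEq α] [LinearOrder W]
    (H : Finset α) (w : Finset α → W)
    (mono : ∀ F G : Finset α, F ⊆ G → G ⊆ H → w F ≤ w G)
    (loc : ∀ F G : Finset α, ∀ h ∈ H, F ⊆ G → G ⊆ H →
      w F = w G → w G < w (insert h G) → w F < w (insert h F))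
    (B C : Finset α) (hB : IsLPBasis H w B) (hC : IsLPBasis H w C)
    (hBC : Relation.TransGen (leZero H w) B C)
    (hCB : Relation.TransGen (leZero H w) C B) :
    violatorsLP H w B = violatorsLP H w C := by
  have step : ∀ X Y : Finset α, Relation.TransGen (leZero H w) X Y → chainP H w X Y := by
    intro X Y h
    induction h with
    | single h => exact leZero_chainP H w mono loc h
    | tail _ h ih => exact chainP_trans H w mono loc ih (leZero_chainP H w mono loc h)
  obtain ⟨B1, C1, hB1, hC1, hVB1, hVC1, hle1, heq1⟩ := step B C hBC
  obtain ⟨B2, C2, hB2, hC2, hVB2, hVC2, hle2, heq2⟩ := step C B hCB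
  have e1 : w C1 = w B2 :=
    w_eq_of_viol_eq H w mono loc C1 B2 hC1 hB2 (hVC1.trans hVB2.symm)
  have e2 : w C2 = w B1 :=
    w_eq_of_viol_eq H w mono loc C2 B1 hC2 hB1 (hVC2.trans hVB1.symm)
  have : w B1 = w C1 :=
    le_antisymm hle1 (by rw [e1]; exact hle2.trans e2.le)
  exact heq1 this
end

section
/- There exists a violator space on a 3-element set H = {f, g, h} that is not acyclic: define V(∅) = {f,g,h}, V({f}) = {h}, V({g}) = {f}, V({h}) = {g}, V({f,g}) = {h}, V({f,h}) = {g}, V({g,h}) = {f}, V(H) = ∅. This mapping satisfies Consistency and Locality, the singletons are pairwise non-equivalent bases, and {f} ≤₀ {h} ≤₀ {g} ≤₀ {f}, so the transitive closure ≤₁ is not antisymmetric. -/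
/-- The cyclic violator mapping on `H = {f, g, h} = {0, 1, 2}`. -/
def V13 : Finset (Fin 3) → Finset (Fin 3) := fun G =>
  if G = ∅ then {0, 1, 2}
  else if G = {0} then {2}
  else if G = {1} then {0}
  else if G = {2} then {1}
  else if G = {0, 1} then {2}
  else if G = {0, 2} then {1}
  else if G = {1, 2} then {0}
  else ∅

/-- A basis of the violator space `(univ, V13)`. -/
def IsBasis13 (B : Finset (Fin 3)) : Prop :=
  ∀ F : Finset (Fin 3), F ⊂ B → (B ∩ V13 F).Nonempty

/-- The relation `≤₀` on equivalence classes of bases (`B ∼ C` iff `V13 B = V13 C`):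
`[B] ≤₀ [C]` iff some basis representatives satisfy `B' ∩ V13 C' = ∅`. -/
def leZero13 (B C : Finset (Fin 3)) : Prop :=
  ∃ B' C' : Finset (Fin 3), IsBasis13 B' ∧ IsBasis13 C' ∧
    V13 B' = V13 B ∧ V13 C' = V13 C ∧ B' ∩ V13 C' = ∅

lemma basis0 : IsBasis13 {0} := by unfold IsBasis13; decide
lemma basis1 : IsBasis13 {1} := by unfold IsBasis13; decide
lemma basis2 : IsBasis13 {2} := by unfold IsBasis13; decide

lemma le02 : leZero13 {0} {2} := ⟨{0}, {2}, basis0, basis2, rfl, rfl, by decide⟩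
lemma le21 : leZero13 {2} {1} := ⟨{2}, {1}, basis2, basis1, rfl, rfl, by decide⟩
lemma le10 : leZero13 {1} {0} := ⟨{1}, {0}, basis1, basis0, rfl, rfl, by decide⟩

/-- `V13` is a violator space (Consistency and Locality hold), the
singletons `{0}, {1}, {2}` are pairwise non-equivalent bases, the cycle
`{0} ≤₀ {2} ≤₀ {1} ≤₀ {0}` holds, and hence the transitive closure `≤₁` of `≤₀` is
not antisymmetric: this violator space is not acyclic. -/
theorem stmt_13 :
    (∀ G : Finset (Fin 3), G ∩ V13 G = ∅) ∧
    (∀ F G : Finset (Fin 3), F ⊆ G → G ∩ V13 F = ∅ → V13 G = V13 F) ∧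
    (IsBasis13 {0} ∧ IsBasis13 {1} ∧ IsBasis13 {2}) ∧
    (V13 {0} ≠ V13 {1} ∧ V13 {1} ≠ V13 {2} ∧ V13 {0} ≠ V13 {2}) ∧
    (({0} : Finset (Fin 3)) ∩ V13 {2} = ∅ ∧
     ({2} : Finset (Fin 3)) ∩ V13 {1} = ∅ ∧
     ({1} : Finset (Fin 3)) ∩ V13 {0} = ∅) ∧
    (Relation.TransGen leZero13 {0} {1} ∧ Relation.TransGen leZero13 {1} {0} ∧
      V13 {0} ≠ V13 {1}) := by
  refine ⟨by decide, by decide, ⟨basis0, basis1, basis2⟩, by decide, by decide,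
    ?_, Relation.TransGen.single le10, by decide⟩
  exact Relation.TransGen.head le02 (Relation.TransGen.single le21)
end

section
/- Sampling Lemma: Let H be a finite set with |H| = n and let w be any function from subsets of H to a set W. Define V(R) = {h ∈ H \ R : w(R) ≠ w(R ∪ {h})} and X(R) = {h ∈ R : w(R) ≠ w(R \ {h})}. For 0 ≤ r < n, let v_r be the expected size of V(R) and x_{r+1} the expected size of X(R') where R and R' are uniformly random subsets of H of sizes r and r+1 respectively. Then v_r / (n − r) = x_{r+1} / (r + 1). -/
open Finset

/-- Sampling Lemma: for a finite set `H` with `|H| = n`, an arbitrary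
function `w` on subsets of `H`, `V R = {h ∈ H \ R : w R ≠ w (R ∪ {h})}`,
`X R = {h ∈ R : w R ≠ w (R \ {h})}`, and `0 ≤ r < n`:
`v_r / (n - r) = x_{r+1} / (r + 1)`, where `v_r` (resp. `x_{r+1}`) is the expected
size of `V R` (resp. `X R'`) over uniformly random subsets `R` of size `r`
(resp. `R'` of size `r + 1`). -/
theorem stmt_15 {α W : Type*} [DecidableEq α] [DecidableEq W]
    (H : Finset α) (w : Finset α → W) (r : ℕ) (hr : r < H.card) :
    ((∑ R ∈ H.powersetCard r,
        (((H \ R).filter fun h => w R ≠ w (insert h R)).card : ℚ)) /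
      (H.card.choose r)) / ((H.card : ℚ) - r)
    = ((∑ R ∈ H.powersetCard (r + 1),
        ((R.filter fun h => w R ≠ w (R.erase h)).card : ℚ)) /
      (H.card.choose (r + 1))) / ((r : ℚ) + 1) := by
  have key : (∑ R ∈ H.powersetCard r,
        ((H \ R).filter fun h => w R ≠ w (insert h R)).card)
      = ∑ R ∈ H.powersetCard (r + 1),
        (R.filter fun h => w R ≠ w (R.erase h)).card := by
    rw [← Finset.card_sigma, ← Finset.card_sigma]
    apply Finset.card_nbij' (fun p => ⟨insert p.2 p.1, p.2⟩)
      (fun p => ⟨p.1.erase p.2, p.2⟩)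
    · intro ⟨R, h⟩ hp
      simp only [Finset.mem_coe, Finset.mem_sigma, Finset.mem_powersetCard, Finset.mem_filter,
        Finset.mem_sdiff] at hp ⊢
      obtain ⟨⟨hRH, hRc⟩, ⟨hhH, hhR⟩, hw⟩ := hp
      refine ⟨⟨Finset.insert_subset hhH hRH, by rw [Finset.card_insert_of_notMem hhR, hRc]⟩,
        Finset.mem_insert_self _ _, ?_⟩
      rw [Finset.erase_insert hhR]
      exact hw.symm
    · intro ⟨R, h⟩ hp
      simp only [Finset.mem_coe, Finset.mem_sigma, Finset.mem_powersetCard, Finset.mem_filter,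
        Finset.mem_sdiff] at hp ⊢
      obtain ⟨⟨hRH, hRc⟩, hhR, hw⟩ := hp
      refine ⟨⟨Finset.erase_subset_iff_of_mem (hRH hhR) |>.mpr hRH, ?_⟩,
        ⟨hRH hhR, Finset.notMem_erase _ _⟩, ?_⟩
      · simp [Finset.card_erase_of_mem hhR, hRc]
      · rw [Finset.insert_erase hhR]
        exact hw.symm
    · intro ⟨R, h⟩ hp
      simp only [Finset.mem_coe, Finset.mem_sigma, Finset.mem_powersetCard, Finset.mem_filter,
        Finset.mem_sdiff] at hp
      obtain ⟨_, ⟨_, hhR⟩, _⟩ := hp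
      simp [Finset.erase_insert hhR]
    · intro ⟨R, h⟩ hp
      simp only [Finset.mem_coe, Finset.mem_sigma, Finset.mem_powersetCard, Finset.mem_filter,
        Finset.mem_sdiff] at hp
      obtain ⟨_, hhR, _⟩ := hp
      simp [Finset.insert_erase hhR]
  have hS : (∑ R ∈ H.powersetCard r,
        (((H \ R).filter fun h => w R ≠ w (insert h R)).card : ℚ))
      = ∑ R ∈ H.powersetCard (r + 1),
        ((R.filter fun h => w R ≠ w (R.erase h)).card : ℚ) := by
    push_cast [← Nat.cast_sum]
    exact_mod_cast congrArg (Nat.cast : ℕ → ℚ) key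
  rw [hS]
  set n := H.card
  have h1 : (n.choose r : ℚ) ≠ 0 := by
    exact_mod_cast (Nat.choose_pos hr.le).ne'
  have h2 : (n.choose (r + 1) : ℚ) ≠ 0 := by
    exact_mod_cast (Nat.choose_pos hr).ne'
  have h3 : (n : ℚ) - r ≠ 0 := by
    have : (r : ℚ) < n := by exact_mod_cast hr
    linarith
  have h4 : (r : ℚ) + 1 ≠ 0 := by positivity
  have hcomb : (n.choose (r + 1) : ℚ) * (r + 1) = (n.choose r : ℚ) * ((n : ℚ) - r) := by
    have := Nat.choose_succ_right_eq n r
    have hc : ((n.choose (r + 1) * (r + 1) : ℕ) : ℚ) = ((n.choose r * (n - r) : ℕ) : ℚ) := by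
      exact_mod_cast congrArg (Nat.cast : ℕ → ℚ) this
    push_cast [Nat.cast_sub hr.le] at hc
    linarith [hc]
  rw [div_div, div_div, ← hcomb]
end

section
/- Let (H, V) be a violator space of combinatorial dimension δ (every basis has at most δ elements) with |H| = n, and fix W ⊆ H. For a uniformly random r-element subset R ⊆ H with r < n, the expected number of elements h ∈ H \ (W ∪ R) with h ∈ V(W ∪ R) is at most δ(n − r)/(r + 1). -/
open Finset

theorem stmt16_extreme {α : Type*} [DecidableEq α]
    (H : Finset α) (V : Finset α → Finset α) (δ : ℕ)
    (cons : ∀ G : Finset α, G ⊆ H → G ∩ V G = ∅)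
    (loc : ∀ F G : Finset α, F ⊆ G → G ⊆ H → G ∩ V F = ∅ → V G = V F)
    (hdim : ∀ G : Finset α, G ⊆ H → ∀ B : Finset α, B ⊆ G → V B = V G →
      (∀ B' : Finset α, B' ⊂ B → V B' ≠ V G) → B.card ≤ δ)
    (G : Finset α) (hG : G ⊆ H) :
    (G.filter fun h => h ∈ V (G.erase h)).card ≤ δ := by
  classical
  -- pick a minimum-cardinality B ⊆ G with V B = V G
  obtain ⟨B, hBmem, hBmin⟩ := Finset.exists_min_image
    ((G.powerset).filter fun B => V B = V G) Finset.card
    ⟨G, by simp⟩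
  rw [Finset.mem_filter, Finset.mem_powerset] at hBmem
  obtain ⟨hBG, hBV⟩ := hBmem
  have hBcard : B.card ≤ δ := by
    refine hdim G hG B hBG hBV ?_
    intro B' hB' hVB'
    have : B.card ≤ B'.card := hBmin B' (by
      rw [Finset.mem_filter, Finset.mem_powerset]
      exact ⟨hB'.subset.trans hBG, hVB'⟩)
    exact absurd (Finset.card_lt_card hB') (not_lt.mpr this)
  refine le_trans (Finset.card_le_card ?_) hBcard
  intro h hh
  rw [Finset.mem_filter] at hh
  obtain ⟨hhG, hhV⟩ := hh
  by_contra hhB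
  have hBsub : B ⊆ G.erase h := fun x hx =>
    Finset.mem_erase.mpr ⟨fun e => hhB (e ▸ hx), hBG hx⟩
  have hdisj : (G.erase h) ∩ V B = ∅ := by
    rw [hBV]
    have := cons G hG
    apply Finset.eq_empty_of_forall_notMem
    intro x hx
    rw [Finset.mem_inter] at hx
    have : x ∈ G ∩ V G := Finset.mem_inter.mpr ⟨Finset.erase_subset _ _ hx.1, hx.2⟩
    simp [cons G hG] at this
  have hVe : V (G.erase h) = V B := loc B (G.erase h) hBsub ((Finset.erase_subset _ _).trans hG) hdisj
  have : h ∈ G ∩ V G := Finset.mem_inter.mpr ⟨hhG, by rw [← hBV, ← hVe]; exact hhV⟩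
  simp [cons G hG] at this

/-- in a violator space `(H, V)` of combinatorial dimension `δ`
(every basis has at most `δ` elements), with `|H| = n`, `W ⊆ H` fixed and `r < n`,
the expected number of violators `h ∈ H \ (W ∪ R)`, `h ∈ V (W ∪ R)`, of `W ∪ R` over
a uniformly random `r`-element subset `R ⊆ H` is at most `δ (n - r) / (r + 1)`. -/
theorem stmt_16 {α : Type*} [DecidableEq α]
    (H : Finset α) (V : Finset α → Finset α) (δ : ℕ)
    (cons : ∀ G : Finset α, G ⊆ H → G ∩ V G = ∅)
    (loc : ∀ F G : Finset α, F ⊆ G → G ⊆ H → G ∩ V F = ∅ → V G = V F)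
    (hdim : ∀ G : Finset α, G ⊆ H → ∀ B : Finset α, B ⊆ G → V B = V G →
      (∀ B' : Finset α, B' ⊂ B → V B' ≠ V G) → B.card ≤ δ)
    (W : Finset α) (hW : W ⊆ H) (r : ℕ) (hr : r < H.card) :
    (∑ R ∈ H.powersetCard r,
        (((H \ (W ∪ R)).filter fun h => h ∈ V (W ∪ R)).card : ℚ)) /
      (H.card.choose r)
    ≤ (δ : ℚ) * ((H.card : ℚ) - r) / ((r : ℚ) + 1) := by
  classical
  set n := H.card with hn
  -- Step 1: counting identity
  have key : ∑ R ∈ H.powersetCard r,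
      ((H \ (W ∪ R)).filter fun h => h ∈ V (W ∪ R)).card
      = ∑ Q ∈ H.powersetCard (r+1),
      (Q.filter fun h => h ∉ W ∧ h ∈ V (W ∪ Q.erase h)).card := by
    rw [← Finset.card_sigma, ← Finset.card_sigma]
    apply Finset.card_bij (fun x _ => (⟨insert x.2 x.1, x.2⟩ :
      (_ : Finset α) × α))
    · rintro ⟨R, h⟩ hx
      rw [Finset.mem_sigma, Finset.mem_powersetCard] at hx
      obtain ⟨⟨hRH, hRcard⟩, hh⟩ := hx
      rw [Finset.mem_filter, Finset.mem_sdiff, Finset.mem_union] at hh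
      obtain ⟨⟨hhH, hhWR⟩, hhV⟩ := hh
      push_neg at hhWR
      rw [Finset.mem_sigma, Finset.mem_powersetCard]
      refine ⟨⟨Finset.insert_subset hhH hRH, ?_⟩, ?_⟩
      · rw [Finset.card_insert_of_notMem hhWR.2, hRcard]
      · rw [Finset.mem_filter]
        refine ⟨Finset.mem_insert_self _ _, hhWR.1, ?_⟩
        rwa [Finset.erase_insert hhWR.2]
    · rintro ⟨R, h⟩ hx ⟨R', h'⟩ hx' heq
      rw [Finset.mem_sigma, Finset.mem_filter, Finset.mem_sdiff, Finset.mem_union] at hx hx'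
      simp only [Sigma.mk.inj_iff] at heq
      obtain ⟨hQ, hh⟩ := heq
      have hh' : h = h' := eq_of_heq hh
      subst hh'
      have : R = R' := by
        have e1 : (insert h R).erase h = R := Finset.erase_insert (by tauto)
        have e2 : (insert h R').erase h = R' := Finset.erase_insert (by tauto)
        rw [← e1, ← e2, hQ]
      simp [this]
    · rintro ⟨Q, h⟩ hx
      rw [Finset.mem_sigma, Finset.mem_powersetCard, Finset.mem_filter] at hx
      obtain ⟨⟨hQH, hQcard⟩, hhQ, hhW, hhV⟩ := hx
      refine ⟨⟨Q.erase h, h⟩, ?_, ?_⟩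
      · rw [Finset.mem_sigma, Finset.mem_powersetCard]
        refine ⟨⟨(Finset.erase_subset _ _).trans hQH, by
          rw [Finset.card_erase_of_mem hhQ, hQcard]; rfl⟩, ?_⟩
        rw [Finset.mem_filter, Finset.mem_sdiff, Finset.mem_union]
        exact ⟨⟨hQH hhQ, by simp [hhW]⟩, hhV⟩
      · simp [Finset.insert_erase hhQ]
  -- Step 2: each Q contributes at most δ
  have bound : ∀ Q ∈ H.powersetCard (r+1),
      (Q.filter fun h => h ∉ W ∧ h ∈ V (W ∪ Q.erase h)).card ≤ δ := by
    intro Q hQ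
    rw [Finset.mem_powersetCard] at hQ
    have hGH : W ∪ Q ⊆ H := Finset.union_subset hW hQ.1
    refine le_trans (Finset.card_le_card ?_)
      (stmt16_extreme H V δ cons loc hdim (W ∪ Q) hGH)
    intro h hh
    rw [Finset.mem_filter] at hh ⊢
    obtain ⟨hhQ, hhW, hhV⟩ := hh
    refine ⟨Finset.mem_union_right _ hhQ, ?_⟩
    have : (W ∪ Q).erase h = W ∪ Q.erase h := by
      rw [Finset.erase_union_distrib, Finset.erase_eq_of_notMem hhW]
    rwa [this]
  -- Step 3: sum bound
  have sumbound : (∑ R ∈ H.powersetCard r,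
      (((H \ (W ∪ R)).filter fun h => h ∈ V (W ∪ R)).card : ℚ))
      ≤ (δ : ℚ) * (n.choose (r+1)) := by
    have hnat : ∑ Q ∈ H.powersetCard (r+1),
        (Q.filter fun h => h ∉ W ∧ h ∈ V (W ∪ Q.erase h)).card ≤ δ * n.choose (r+1) := by
      calc ∑ Q ∈ H.powersetCard (r+1),
          (Q.filter fun h => h ∉ W ∧ h ∈ V (W ∪ Q.erase h)).card
          ≤ ∑ _Q ∈ H.powersetCard (r+1), δ := Finset.sum_le_sum bound
        _ = δ * n.choose (r+1) := by
            rw [Finset.sum_const, Finset.card_powersetCard, ← hn, smul_eq_mul, Nat.mul_comm]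
    rw [← Nat.cast_sum, key]
    exact_mod_cast hnat
  -- Step 4: arithmetic
  have hchoose : 0 < (n.choose r : ℚ) := by
    exact_mod_cast Nat.choose_pos hr.le
  rw [div_le_div_iff₀ hchoose (by positivity)]
  refine le_trans (mul_le_mul_of_nonneg_right sumbound (by positivity)) ?_
  have hid : (n.choose (r+1) : ℚ) * ((r:ℚ)+1) = (n.choose r : ℚ) * ((n : ℚ) - r) := by
    have h2 : n.choose (r+1) * (r+1) = n.choose r * (n - r) := Nat.choose_succ_right_eq n r
    calc (n.choose (r+1) : ℚ) * ((r:ℚ)+1)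
        = ((n.choose (r+1) * (r+1) : ℕ) : ℚ) := by push_cast; ring
      _ = ((n.choose r * (n - r) : ℕ) : ℚ) := by rw [h2]
      _ = (n.choose r : ℚ) * ((n:ℚ) - r) := by push_cast [Nat.cast_sub hr.le]; ring
  exact le_of_eq (by linear_combination (δ:ℚ) * hid)
end

section
/- In a violator space of combinatorial dimension δ, every subset R ⊆ H has at most δ extreme elements, where h ∈ R is extreme in R if V(R) ≠ V(R \ {h}). -/
open Finset

/-- in a violator space `(H, V)` of combinatorial dimension `δ`
(every basis has at most `δ` elements), every `R ⊆ H` has at most `δ` extreme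
elements, where `h ∈ R` is extreme in `R` if `V R ≠ V (R \ {h})`. -/
theorem stmt_17 {α : Type*} [DecidableEq α]
    (H : Finset α) (V : Finset α → Finset α) (δ : ℕ)
    (cons : ∀ G : Finset α, G ⊆ H → G ∩ V G = ∅)
    (loc : ∀ F G : Finset α, F ⊆ G → G ⊆ H → G ∩ V F = ∅ → V G = V F)
    (hdim : ∀ G : Finset α, G ⊆ H → ∀ B : Finset α, B ⊆ G → V B = V G →
      (∀ B' : Finset α, B' ⊂ B → V B' ≠ V G) → B.card ≤ δ)
    (R : Finset α) (hR : R ⊆ H) :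
    (R.filter fun h => V R ≠ V (R.erase h)).card ≤ δ := by
  classical
  -- pick a basis B of R: minimal-cardinality subset with V B = V R
  obtain ⟨B, hBmem, hBmin⟩ := Finset.exists_min_image
    (R.powerset.filter fun B => V B = V R) Finset.card
    ⟨R, by simp⟩
  simp only [Finset.mem_filter, Finset.mem_powerset] at hBmem
  obtain ⟨hBR, hBV⟩ := hBmem
  have hmin : ∀ B' : Finset α, B' ⊂ B → V B' ≠ V R := by
    intro B' hB' hV'
    have := hBmin B' (by
      simp only [Finset.mem_filter, Finset.mem_powerset]
      exact ⟨hB'.subset.trans hBR, hV'⟩)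
    exact absurd (Finset.card_lt_card hB') (by omega)
  have hcard : B.card ≤ δ := hdim R hR B hBR hBV hmin
  refine le_trans (Finset.card_le_card ?_) hcard
  intro h hh
  simp only [Finset.mem_filter] at hh
  obtain ⟨hhR, hext⟩ := hh
  by_contra hhB
  have hBsub : B ⊆ R.erase h := fun x hx =>
    Finset.mem_erase.mpr ⟨fun e => hhB (e ▸ hx), hBR hx⟩
  have hdisj : (R.erase h) ∩ V B = ∅ := by
    rw [hBV]
    have := cons R hR
    apply Finset.eq_empty_of_forall_notMem
    intro x hx
    simp only [Finset.mem_inter, Finset.mem_erase] at hx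
    exact Finset.eq_empty_iff_forall_notMem.mp this x
      (Finset.mem_inter.mpr ⟨hx.1.2, hx.2⟩)
  have := loc B (R.erase h) hBsub ((Finset.erase_subset h R).trans hR) hdisj
  exact hext (by rw [this, hBV])
end

section
/- Let Π = (Π₁, …, Π_δ) be a partition of a finite set H into δ nonempty blocks, and let ψ be a unique sink orientation of the grid on H. Define V(G) = s_ψ(sink(G)) if G intersects every block, and V(G) = union of all blocks disjoint from G otherwise. Then (H, V) is a violator space: it satisfies Consistency and Locality. -/
open Finset

/-- let `Π = (P 0, …, P (δ-1))` be a partition of a finite set `H` into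
`δ` nonempty blocks, and `ψ` a unique sink orientation of the grid on `H`, given by its
outmap `s` on vertices (`s J ⊆ H \ J`), with `sink G` the unique sink of the subgrid
spanned by a Π-valid `G` (the unique vertex `J ⊆ G` with no outgoing edge into `G`,
i.e. `s J ∩ G = ∅`). Define `V G = s (sink G)` if `G` is Π-valid, and `V G` to be the
union of all blocks disjoint from `G` otherwise. Then `(H, V)` is a violator space:
it satisfies Consistency and Locality. -/
theorem stmt_18 {α : Type*} [DecidableEq α] {δ : ℕ}
    (H : Finset α) (P : Fin δ → Finset α)
    (hPsub : ∀ i, P i ⊆ H)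
    (hPne : ∀ i, (P i).Nonempty)
    (hPdisj : ∀ i j, i ≠ j → Disjoint (P i) (P j))
    (hPcov : ∀ h ∈ H, ∃ i, h ∈ P i)
    (s : Finset α → Finset α) (sink : Finset α → Finset α)
    (hs : ∀ J : Finset α, (∀ i, (J ∩ P i).card = 1) → s J ⊆ H \ J)
    (hsink : ∀ G : Finset α, G ⊆ H → (∀ i, (G ∩ P i).Nonempty) →
      (∀ i, (sink G ∩ P i).card = 1) ∧ sink G ⊆ G ∧ s (sink G) ∩ G = ∅)
    (huniq : ∀ G : Finset α, G ⊆ H → (∀ i, (G ∩ P i).Nonempty) →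
      ∀ J : Finset α, (∀ i, (J ∩ P i).card = 1) → J ⊆ G → s J ∩ G = ∅ → J = sink G)
    (V : Finset α → Finset α)
    (hV1 : ∀ G : Finset α, G ⊆ H → (∀ i, (G ∩ P i).Nonempty) → V G = s (sink G))
    (hV2 : ∀ G : Finset α, G ⊆ H → ¬ (∀ i, (G ∩ P i).Nonempty) →
      V G = Finset.univ.biUnion fun i => if G ∩ P i = ∅ then P i else ∅) :
    (∀ G : Finset α, G ⊆ H → G ∩ V G = ∅) ∧
    (∀ F G : Finset α, F ⊆ G → G ⊆ H → G ∩ V F = ∅ → V G = V F) := by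

  constructor
  · -- Consistency
    intro G hGH
    by_cases hval : ∀ i, (G ∩ P i).Nonempty
    · rw [hV1 G hGH hval, Finset.inter_comm]
      exact (hsink G hGH hval).2.2
    · rw [hV2 G hGH hval, Finset.eq_empty_iff_forall_notMem]
      intro x hx
      simp only [Finset.mem_inter, Finset.mem_biUnion, Finset.mem_univ, true_and] at hx
      obtain ⟨hxG, i, hi⟩ := hx
      split_ifs at hi with h
      · have hmem : x ∈ G ∩ P i := Finset.mem_inter.mpr ⟨hxG, hi⟩
        rw [h] at hmem
        exact absurd hmem (Finset.notMem_empty x)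
      · exact absurd hi (Finset.notMem_empty x)
  · -- Locality
    intro F G hFG hGH hGVF
    have hFH : F ⊆ H := hFG.trans hGH
    by_cases hval : ∀ i, (F ∩ P i).Nonempty
    · have hGval : ∀ i, (G ∩ P i).Nonempty := fun i =>
        (hval i).mono (Finset.inter_subset_inter hFG (Finset.Subset.refl _))
      rw [hV1 F hFH hval, hV1 G hGH hGval]
      have hF := hsink F hFH hval
      have key : sink F = sink G := by
        apply huniq G hGH hGval _ hF.1 (hF.2.1.trans hFG)
        rw [hV1 F hFH hval] at hGVF
        rw [Finset.inter_comm]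
        exact hGVF
      rw [key]
    · -- F not valid; show G∩Pi=∅ ↔ F∩Pi=∅
      have hiff : ∀ i, (G ∩ P i = ∅) ↔ (F ∩ P i = ∅) := by
        intro i
        constructor
        · intro h
          rw [Finset.eq_empty_iff_forall_notMem] at h ⊢
          intro x hx
          exact h x (Finset.mem_inter.mpr ⟨hFG (Finset.mem_inter.mp hx).1,
            (Finset.mem_inter.mp hx).2⟩)
        · intro h
          rw [Finset.eq_empty_iff_forall_notMem]
          intro x hx
          have hxV : x ∈ V F := by
            rw [hV2 F hFH hval]
            simp only [Finset.mem_biUnion, Finset.mem_univ, true_and]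
            exact ⟨i, by rw [if_pos h]; exact (Finset.mem_inter.mp hx).2⟩
          have : x ∈ G ∩ V F := Finset.mem_inter.mpr ⟨(Finset.mem_inter.mp hx).1, hxV⟩
          rw [hGVF] at this
          exact absurd this (Finset.notMem_empty x)
      have hGval : ¬ ∀ i, (G ∩ P i).Nonempty := fun hc => hval fun i =>
        Finset.nonempty_iff_ne_empty.mpr fun h =>
          Finset.nonempty_iff_ne_empty.mp (hc i) ((hiff i).mpr h)
      rw [hV2 F hFH hval, hV2 G hGH hGval]
      apply Finset.biUnion_congr rfl
      intro i _
      by_cases h : F ∩ P i = ∅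
      · rw [if_pos h, if_pos ((hiff i).mpr h)]
      · rw [if_neg h, if_neg (fun hc => h ((hiff i).mp hc))]
end

section
/- In the violator space (H, V) arising from a unique sink orientation of a δ-dimensional grid, the combinatorial dimension is at most δ, and for every Π-valid G ⊆ H, the vertex sink(G) is the unique basis of G. -/
open Finset

/-- in the violator space `(H, V)` arising from a unique sink orientation
of a `δ`-dimensional grid (setup as in the grid USO construction: blocks `P i`, outmap
`s`, unique subgrid sinks `sink G`, `V G = s (sink G)` for Π-valid `G` and `V G` the
union of blocks disjoint from `G` otherwise), the combinatorial dimension is at most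
`δ` (every basis has at most `δ` elements), and for every Π-valid `G ⊆ H` the vertex
`sink G` is the unique basis of `G`. -/
theorem stmt_19 {α : Type*} [DecidableEq α] {δ : ℕ}
    (H : Finset α) (P : Fin δ → Finset α)
    (hPsub : ∀ i, P i ⊆ H)
    (hPne : ∀ i, (P i).Nonempty)
    (hPdisj : ∀ i j, i ≠ j → Disjoint (P i) (P j))
    (hPcov : ∀ h ∈ H, ∃ i, h ∈ P i)
    (s : Finset α → Finset α) (sink : Finset α → Finset α)
    (hs : ∀ J : Finset α, (∀ i, (J ∩ P i).card = 1) → s J ⊆ H \ J)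
    (hsink : ∀ G : Finset α, G ⊆ H → (∀ i, (G ∩ P i).Nonempty) →
      (∀ i, (sink G ∩ P i).card = 1) ∧ sink G ⊆ G ∧ s (sink G) ∩ G = ∅)
    (huniq : ∀ G : Finset α, G ⊆ H → (∀ i, (G ∩ P i).Nonempty) →
      ∀ J : Finset α, (∀ i, (J ∩ P i).card = 1) → J ⊆ G → s J ∩ G = ∅ → J = sink G)
    (V : Finset α → Finset α)
    (hV1 : ∀ G : Finset α, G ⊆ H → (∀ i, (G ∩ P i).Nonempty) → V G = s (sink G))
    (hV2 : ∀ G : Finset α, G ⊆ H → ¬ (∀ i, (G ∩ P i).Nonempty) →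
      V G = Finset.univ.biUnion fun i => if G ∩ P i = ∅ then P i else ∅) :
    (∀ G : Finset α, G ⊆ H → ∀ B : Finset α, B ⊆ G → V B = V G →
      (∀ B' : Finset α, B' ⊂ B → V B' ≠ V G) → B.card ≤ δ) ∧
    (∀ G : Finset α, G ⊆ H → (∀ i, (G ∩ P i).Nonempty) →
      (sink G ⊆ G ∧ V (sink G) = V G ∧
        (∀ B' : Finset α, B' ⊂ sink G → V B' ≠ V G)) ∧
      (∀ B : Finset α, B ⊆ G → V B = V G →
        (∀ B' : Finset α, B' ⊂ B → V B' ≠ V G) → B = sink G)) := by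
  -- the sink has at most δ elements
  have hcard1 : ∀ G : Finset α, G ⊆ H → (∀ i, (G ∩ P i).Nonempty) →
      (sink G).card ≤ δ := by
    intro G hG hGne
    have h1 := (hsink G hG hGne).1
    have hsub : sink G ⊆ Finset.univ.biUnion (fun i => sink G ∩ P i) := by
      intro x hx
      obtain ⟨i, hi⟩ := hPcov x (hG ((hsink G hG hGne).2.1 hx))
      exact Finset.mem_biUnion.mpr ⟨i, Finset.mem_univ i, Finset.mem_inter.mpr ⟨hx, hi⟩⟩
    calc (sink G).card ≤ _ := Finset.card_le_card hsub
      _ ≤ ∑ i, (sink G ∩ P i).card := Finset.card_biUnion_le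
      _ = ∑ _i : Fin δ, 1 := by simp [h1]
      _ = δ := by simp
  -- main lemma: for Π-valid G, any B ⊆ G with V B = V G contains sink G
  have main : ∀ G : Finset α, G ⊆ H → (∀ i, (G ∩ P i).Nonempty) →
      ∀ B : Finset α, B ⊆ G → V B = V G → sink G ⊆ B := by
    intro G hG hGne B hBG hVB
    have hVG := (hsink G hG hGne).2.2
    have hBne : ∀ i, (B ∩ P i).Nonempty := by
      by_contra hcon
      push_neg at hcon
      obtain ⟨i, hi⟩ := hcon
      have hB2 := hV2 B (hBG.trans hG) (by
        intro hall
        exact absurd (hall i) (by rw [hi]; exact Finset.not_nonempty_empty))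
      obtain ⟨x, hx⟩ := hGne i
      rw [Finset.mem_inter] at hx
      have hxV : x ∈ V B := by
        rw [hB2]
        exact Finset.mem_biUnion.mpr ⟨i, Finset.mem_univ i, by rw [if_pos hi]; exact hx.2⟩
      rw [hVB, hV1 G hG hGne] at hxV
      have hmem : x ∈ s (sink G) ∩ G := Finset.mem_inter.mpr ⟨hxV, hx.1⟩
      rw [hVG] at hmem
      exact absurd hmem (Finset.notMem_empty x)
    have hsB := hsink B (hBG.trans hG) hBne
    have heq : sink B = sink G := by
      apply huniq G hG hGne (sink B) hsB.1 (hsB.2.1.trans hBG)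
      have hss : s (sink B) = s (sink G) := by
        rw [← hV1 B (hBG.trans hG) hBne, hVB, hV1 G hG hGne]
      rw [hss, hVG]
    exact heq ▸ hsB.2.1
  -- V (sink G) = V G for Π-valid G
  have hVsink : ∀ G : Finset α, G ⊆ H → (∀ i, (G ∩ P i).Nonempty) →
      V (sink G) = V G := by
    intro G hG hGne
    obtain ⟨h1, h2, h3⟩ := hsink G hG hGne
    have hne : ∀ i, (sink G ∩ P i).Nonempty := fun i =>
      Finset.card_pos.mp (by rw [h1 i]; norm_num)
    have hss : sink G ⊆ H := h2.trans hG
    have hfix : sink (sink G) = sink G := by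
      symm
      apply huniq (sink G) hss hne (sink G) h1 Finset.Subset.rfl
      apply Finset.subset_empty.mp
      rw [← h3]
      exact Finset.inter_subset_inter Finset.Subset.rfl h2
    rw [hV1 (sink G) hss hne, hfix, hV1 G hG hGne]
  -- second conjunct
  have part2 : ∀ G : Finset α, G ⊆ H → (∀ i, (G ∩ P i).Nonempty) →
      (sink G ⊆ G ∧ V (sink G) = V G ∧
        (∀ B' : Finset α, B' ⊂ sink G → V B' ≠ V G)) ∧
      (∀ B : Finset α, B ⊆ G → V B = V G →
        (∀ B' : Finset α, B' ⊂ B → V B' ≠ V G) → B = sink G) := by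
    intro G hG hGne
    have h2 := (hsink G hG hGne).2.1
    refine ⟨⟨h2, hVsink G hG hGne, ?_⟩, ?_⟩
    · intro B' hB' hVB'
      have hsub := main G hG hGne B' (hB'.subset.trans h2) hVB'
      exact hB'.not_subset hsub
    · intro B hBG hVB hmin
      have hsub := main G hG hGne B hBG hVB
      by_contra hne
      have hss : sink G ⊂ B := hsub.ssubset_of_ne (fun h => hne h.symm)
      exact hmin (sink G) hss (hVsink G hG hGne)
  refine ⟨?_, part2⟩
  intro G hG B hBG hVB hmin
  by_cases hGne : ∀ i, (G ∩ P i).Nonempty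
  · have hB := (part2 G hG hGne).2 B hBG hVB hmin
    rw [hB]
    exact hcard1 G hG hGne
  · -- G not Π-valid: pick a block disjoint from G
    push_neg at hGne
    obtain ⟨i0, hi0⟩ := hGne
    have hBH : B ⊆ H := hBG.trans hG
    have hBi0 : B ∩ P i0 = ∅ := Finset.subset_empty.mp
      (by rw [← hi0]; exact Finset.inter_subset_inter hBG Finset.Subset.rfl)
    have hBnv : ¬ ∀ i, (B ∩ P i).Nonempty := fun h =>
      absurd (h i0) (by rw [hBi0]; exact Finset.not_nonempty_empty)
    by_contra hcard
    push_neg at hcard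
    -- find a block meeting B in at least 2 points
    have hex : ∃ i, 1 < (B ∩ P i).card := by
      by_contra hall
      push_neg at hall
      have hsub : B ⊆ Finset.univ.biUnion (fun i => B ∩ P i) := by
        intro x hx
        obtain ⟨i, hi⟩ := hPcov x (hBH hx)
        exact Finset.mem_biUnion.mpr ⟨i, Finset.mem_univ i, Finset.mem_inter.mpr ⟨hx, hi⟩⟩
      have : B.card ≤ δ := by
        calc B.card ≤ _ := Finset.card_le_card hsub
          _ ≤ ∑ i, (B ∩ P i).card := Finset.card_biUnion_le
          _ ≤ ∑ _i : Fin δ, 1 := Finset.sum_le_sum (fun i _ => hall i)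
          _ = δ := by simp
      omega
    obtain ⟨i, hi2⟩ := hex
    obtain ⟨x, hx, y, hy, hxy⟩ := Finset.one_lt_card.mp hi2
    rw [Finset.mem_inter] at hx hy
    have hB'i0 : B.erase x ∩ P i0 = ∅ := Finset.subset_empty.mp
      (by rw [← hBi0]; exact Finset.inter_subset_inter (Finset.erase_subset x B) Finset.Subset.rfl)
    have hB'nv : ¬ ∀ j, (B.erase x ∩ P j).Nonempty := fun h =>
      absurd (h i0) (by rw [hB'i0]; exact Finset.not_nonempty_empty)
    have hiff : ∀ j, (B.erase x ∩ P j = ∅) = (B ∩ P j = ∅) := by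
      intro j
      apply propext
      constructor
      · intro h
        by_contra hne'
        obtain ⟨z, hz⟩ := Finset.nonempty_iff_ne_empty.mpr hne'
        rw [Finset.mem_inter] at hz
        by_cases hji : j = i
        · subst hji
          have hmem : y ∈ B.erase x ∩ P j :=
            Finset.mem_inter.mpr ⟨Finset.mem_erase.mpr ⟨hxy.symm, hy.1⟩, hy.2⟩
          rw [h] at hmem
          exact Finset.notMem_empty y hmem
        · have hzx : z ≠ x := by
            intro hzxe
            exact (Finset.disjoint_left.mp (hPdisj j i hji) hz.2) (hzxe ▸ hx.2)
          have hmem : z ∈ B.erase x ∩ P j :=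
            Finset.mem_inter.mpr ⟨Finset.mem_erase.mpr ⟨hzx, hz.1⟩, hz.2⟩
          rw [h] at hmem
          exact Finset.notMem_empty z hmem
      · intro h
        exact Finset.subset_empty.mp
          (by rw [← h]; exact Finset.inter_subset_inter (Finset.erase_subset x B) Finset.Subset.rfl)
    have hVe : V (B.erase x) = V B := by
      rw [hV2 _ ((Finset.erase_subset x B).trans hBH) hB'nv, hV2 B hBH hBnv]
      apply Finset.biUnion_congr rfl
      intro j _
      exact if_congr (Eq.to_iff (hiff j)) rfl rfl
    exact hmin (B.erase x) (Finset.erase_ssubset hx.1) (hVe.trans hVB)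
end
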